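/- (Theorem 1, prediction norm bound.) Let c > 1 and c̄ = (c+1)/(c−1). Suppose κ̃ > 0 and that ρ̄ := λ√s/(nκ̃) < 1. If λ/n ≥ c‖Γ⁻¹S̃‖_∞, then any square-root lasso minimizer β̂ satisfies ‖β̂ − β₀‖_{2,n} ≤ 2√Q̂(β₀) · (ϱ_c̄ + ρ̄)/(1 − ρ̄²). -/

import Mathlib

open Finset MeasureTheory ProbabilityTheory

namespace SqrtLasso

/-- Empirical average `E_n[h_i] = n⁻¹ ∑ᵢ h i`. -/
noncomputable def En (n : ℕ) (h : Fin n → ℝ) : ℝ := (∑ i, h i) / n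

/-- Euclidean inner product `a'b = ∑ⱼ aⱼ bⱼ`. -/
noncomputable def dot {p : ℕ} (a b : Fin p → ℝ) : ℝ := ∑ j, a j * b j

/-- Prediction norm `‖δ‖_{2,n} = (E_n[(x_i'δ)²])^{1/2}`. -/
noncomputable def predNorm (n : ℕ) {p : ℕ} (x : Fin n → Fin p → ℝ) (δ : Fin p → ℝ) : ℝ :=
  Real.sqrt (En n fun i => (dot (x i) δ) ^ 2)

/-- `ℓ₁` norm of a vector. -/
noncomputable def l1 {p : ℕ} (v : Fin p → ℝ) : ℝ := ∑ j, |v j|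

/-- Restriction `v_S`: equal to `v` on `S` and `0` outside. -/
def restr {p : ℕ} (S : Finset (Fin p)) (v : Fin p → ℝ) : Fin p → ℝ :=
  fun j => if j ∈ S then v j else 0

/-- `Γ v`, i.e. componentwise rescaling by loadings `γ`. -/
noncomputable def scl {p : ℕ} (γ v : Fin p → ℝ) : Fin p → ℝ := fun j => γ j * v j

/-- The support of a vector. -/
noncomputable def supp {p : ℕ} (β : Fin p → ℝ) : Finset (Fin p) := Finset.univ.filter fun j => β j ≠ 0

/-- The least-squares criterion `Q̂(β) = E_n[(y_i - x_i'β)²]`. -/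
noncomputable def Qhat (n : ℕ) {p : ℕ} (x : Fin n → Fin p → ℝ) (y : Fin n → ℝ)
    (β : Fin p → ℝ) : ℝ := En n fun i => (y i - dot (x i) β) ^ 2

/-- The restricted set `Δ_c̄`. -/
def Delta {p : ℕ} (γ : Fin p → ℝ) (T : Finset (Fin p)) (cb : ℝ) : Set (Fin p → ℝ) :=
  {δ | δ ≠ 0 ∧ l1 (scl γ (restr Tᶜ δ)) ≤ cb * l1 (scl γ (restr T δ))}

/-- The restricted eigenvalue `κ_c̄`. -/
noncomputable def kappa (n : ℕ) {p : ℕ} (x : Fin n → Fin p → ℝ) (γ : Fin p → ℝ)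
    (T : Finset (Fin p)) (cb : ℝ) : ℝ :=
  sInf {r | ∃ δ ∈ Delta γ T cb,
    r = Real.sqrt T.card * predNorm n x δ / l1 (scl γ (restr T δ))}

/-- The quantity `κ̃`. -/
noncomputable def kappaTilde (n : ℕ) {p : ℕ} (x : Fin n → Fin p → ℝ) (γ : Fin p → ℝ)
    (T : Finset (Fin p)) : ℝ :=
  sInf {r | ∃ δ : Fin p → ℝ, l1 (scl γ (restr Tᶜ δ)) < l1 (scl γ (restr T δ)) ∧
    r = Real.sqrt T.card * predNorm n x δ /
      (l1 (scl γ (restr T δ)) - l1 (scl γ (restr Tᶜ δ)))}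

/-- The score `S̃ = E_n[x_i(σε_i + r_i)] / √(E_n[(σε_i + r_i)²])`. -/
noncomputable def score (n : ℕ) {p : ℕ} (x : Fin n → Fin p → ℝ) (ε rr : Fin n → ℝ)
    (σ : ℝ) : Fin p → ℝ :=
  fun j => En n (fun i => x i j * (σ * ε i + rr i)) /
    Real.sqrt (En n fun i => (σ * ε i + rr i) ^ 2)

/-- `‖Γ⁻¹ S̃‖_∞ = max_j |S̃_j| / γ_j`. -/
noncomputable def scoreSup (n : ℕ) {p : ℕ} (x : Fin n → Fin p → ℝ) (ε rr : Fin n → ℝ)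
    (σ : ℝ) (γ : Fin p → ℝ) : ℝ :=
  ⨆ j, |score n x ε rr σ j| / γ j

/-- The quantity `ϱ_c̄`. -/
noncomputable def varrho (n : ℕ) {p : ℕ} (x : Fin n → Fin p → ℝ) (γ : Fin p → ℝ)
    (T : Finset (Fin p)) (β₀ : Fin p → ℝ) (S : Fin p → ℝ) (cb : ℝ) : ℝ :=
  sSup {r | ∃ δ ∈ Delta γ T cb, 0 < predNorm n x δ ∧
    l1 (scl γ (δ + β₀)) ≤ cb * l1 (scl γ β₀) ∧ r = |dot S δ| / predNorm n x δ}

/-- Quadratic form `δ'Mδ`. -/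
noncomputable def quadForm {p : ℕ} (M : Fin p → Fin p → ℝ) (δ : Fin p → ℝ) : ℝ :=
  ∑ j, ∑ k, δ j * M j k * δ k

/-- Maximal `m`-sparse eigenvalue `φ_max(m, M)`. -/
noncomputable def phiMax {p : ℕ} (M : Fin p → Fin p → ℝ) (T : Finset (Fin p)) (m : ℕ) : ℝ :=
  sSup {r | ∃ δ : Fin p → ℝ, δ ≠ 0 ∧ (supp δ \ T).card ≤ m ∧
    r = quadForm M δ / ∑ j, (δ j) ^ 2}

/-- Minimal `m`-sparse eigenvalue `φ_min(m, M)`. -/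
noncomputable def phiMin {p : ℕ} (M : Fin p → Fin p → ℝ) (T : Finset (Fin p)) (m : ℕ) : ℝ :=
  sInf {r | ∃ δ : Fin p → ℝ, δ ≠ 0 ∧ (supp δ \ T).card ≤ m ∧
    r = quadForm M δ / ∑ j, (δ j) ^ 2}

/-- Gram matrix `E_n[x_i x_i']`. -/
noncomputable def gram (n : ℕ) {p : ℕ} (x : Fin n → Fin p → ℝ) : Fin p → Fin p → ℝ :=
  fun j k => En n fun i => x i j * x i k

/-- Rescaled Gram matrix `Γ⁻¹ E_n[x_i x_i'] Γ⁻¹`. -/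
noncomputable def rgram (n : ℕ) {p : ℕ} (x : Fin n → Fin p → ℝ) (γ : Fin p → ℝ) :
    Fin p → Fin p → ℝ :=
  fun j k => gram n x j k / (γ j * γ k)

/-- Auxiliary: `E_n` of squares is nonnegative. -/
lemma en_sq_nonneg (n : ℕ) (a : Fin n → ℝ) : 0 ≤ En n fun i => a i ^ 2 := by
  unfold En; positivity

/-- Auxiliary: Cauchy–Schwarz for empirical averages. -/
lemma cs_en (n : ℕ) (a b : Fin n → ℝ) :
    |En n (fun i => a i * b i)| ≤
      Real.sqrt (En n fun i => a i ^ 2) * Real.sqrt (En n fun i => b i ^ 2) := by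
  have h1 : (∑ i, a i * b i)^2 ≤ (∑ i, a i ^2) * (∑ i, b i ^2) :=
    Finset.sum_mul_sq_le_sq_mul_sq _ _ _
  have h2 : (En n fun i => a i * b i)^2 ≤ (En n fun i => a i^2) * (En n fun i => b i^2) := by
    unfold En
    rw [div_pow, div_mul_div_comm, ← sq]
    exact div_le_div_of_nonneg_right h1 (by positivity)
  calc |En n (fun i => a i * b i)| = Real.sqrt ((En n fun i => a i * b i)^2) :=
        (Real.sqrt_sq_eq_abs _).symm
    _ ≤ Real.sqrt ((En n fun i => a i^2) * (En n fun i => b i^2)) := Real.sqrt_le_sqrt h2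
    _ = _ := Real.sqrt_mul (en_sq_nonneg n a) _

/-- Auxiliary: `l1` of a restricted rescaled vector is a partial sum. -/
lemma l1_scl_restr {p : ℕ} (γ v : Fin p → ℝ) (S : Finset (Fin p)) :
    l1 (scl γ (restr S v)) = ∑ j ∈ S, |γ j * v j| := by
  unfold l1 scl restr
  calc (∑ j, |γ j * (if j ∈ S then v j else 0)|)
      = ∑ j, (if j ∈ S then |γ j * v j| else 0) := by
        apply Finset.sum_congr rfl; intro j _; split <;> simp
    _ = ∑ j ∈ S, |γ j * v j| := by rw [Finset.sum_ite_mem, Finset.univ_inter]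

/-- Auxiliary: expansion of an empirical average of squared differences. -/
lemma en_sq_sub (n : ℕ) (u v : Fin n → ℝ) :
    En n (fun i => (u i - v i)^2) =
      En n (fun i => u i^2) - 2 * En n (fun i => u i * v i) + En n (fun i => v i^2) := by
  unfold En
  have h : ∑ i, (u i - v i)^2 = ∑ i, u i^2 - 2*∑ i, u i * v i + ∑ i, v i ^2 := by
    rw [Finset.mul_sum, ← Finset.sum_sub_distrib, ← Finset.sum_add_distrib]
    exact Finset.sum_congr rfl fun i _ => by ring
  rw [h]; ring

/-- Auxiliary: swapping sums in an empirical average of a product with a dot product. -/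
lemma en_mul_dot (n : ℕ) {p : ℕ} (x : Fin n → Fin p → ℝ) (u : Fin n → ℝ) (d : Fin p → ℝ) :
    En n (fun i => u i * dot (x i) d) = ∑ j, (En n fun i => x i j * u i) * d j := by
  unfold En dot
  have hr : ∑ j, ((∑ i, x i j * u i)/(n:ℝ)) * d j = (∑ j, (∑ i, x i j * u i) * d j)/n := by
    rw [Finset.sum_div]; exact Finset.sum_congr rfl fun j _ => by ring
  rw [hr]
  congr 1
  calc ∑ i, u i * ∑ j, x i j * d j = ∑ i, ∑ j, u i * (x i j * d j) := by
        exact Finset.sum_congr rfl fun i _ => by rw [Finset.mul_sum]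
    _ = ∑ j, ∑ i, u i * (x i j * d j) := Finset.sum_comm
    _ = ∑ j, (∑ i, x i j * u i) * d j := by
        refine Finset.sum_congr rfl fun j _ => ?_
        rw [Finset.sum_mul]; exact Finset.sum_congr rfl fun i _ => by ring
set_option maxHeartbeats 1000000 in
/-- Theorem 1, prediction norm bound:
`‖β̂ - β₀‖_{2,n} ≤ 2 √Q̂(β₀) (ϱ_c̄ + ρ̄)/(1 - ρ̄²)`. -/
theorem statement_5 (n p : ℕ) (hn : 1 ≤ n) (hp : 1 ≤ p)
    (x : Fin n → Fin p → ℝ) (β₀ γ : Fin p → ℝ) (hγ : ∀ j, 1 ≤ γ j)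
    (hs : 1 ≤ (supp β₀).card)
    (σ : ℝ) (hσ : 0 ≤ σ) (ε rr : Fin n → ℝ) (y : Fin n → ℝ)
    (hy : ∀ i, y i = dot (x i) β₀ + σ * ε i + rr i)
    (hQ : 0 < En n fun i => (σ * ε i + rr i) ^ 2)
    (lam : ℝ) (hlam : 0 < lam)
    (c : ℝ) (hc : 1 < c)
    (hdom : c * scoreSup n x ε rr σ γ ≤ lam / n)
    (βh : Fin p → ℝ)
    (hmin : ∀ β : Fin p → ℝ,
      Real.sqrt (Qhat n x y βh) + lam / n * l1 (scl γ βh) ≤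
        Real.sqrt (Qhat n x y β) + lam / n * l1 (scl γ β))
    (hκ : 0 < kappaTilde n x γ (supp β₀))
    (ρ : ℝ)
    (hρdef : ρ = lam * Real.sqrt (supp β₀).card / (n * kappaTilde n x γ (supp β₀)))
    (hρ : ρ < 1) :
    predNorm n x (βh - β₀) ≤
      2 * Real.sqrt (Qhat n x y β₀) *
        ((varrho n x γ (supp β₀) β₀ (score n x ε rr σ) ((c + 1) / (c - 1)) + ρ) /
          (1 - ρ ^ 2)) := by
  -- basic positivity
  have hn' : (0:ℝ) < n := by exact_mod_cast hn
  have hcb : (0:ℝ) < c - 1 := by linarith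
  have hc0 : (0:ℝ) < c := by linarith
  set T := supp β₀ with hTdef
  set d : Fin p → ℝ := βh - β₀ with hddef
  set q0 : ℝ := Real.sqrt (En n fun i => (σ * ε i + rr i) ^ 2) with hq0def
  set t : ℝ := predNorm n x d with htdef
  set S : Fin p → ℝ := score n x ε rr σ with hSdef
  set G : ℝ := dot S d with hGdef
  set cbar : ℝ := (c + 1) / (c - 1) with hcbardef
  set L : ℝ := lam / n with hLdef
  set q : ℝ := Real.sqrt (Qhat n x y βh) with hqdef
  set ϱ : ℝ := varrho n x γ T β₀ S cbar with hϱdef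
  set a : ℝ := ∑ j ∈ T, |γ j * d j| with hadef
  set b : ℝ := ∑ j ∈ Tᶜ, |γ j * d j| with hbdef
  -- facts that use definitional unfolding of the `set` variables
  have hq0 : 0 < q0 := Real.sqrt_pos.mpr hQ
  have hq0sq : q0 ^ 2 = En n fun i => (σ * ε i + rr i) ^ 2 := Real.sq_sqrt hQ.le
  have ht0 : 0 ≤ t := Real.sqrt_nonneg _
  have ht2 : t ^ 2 = En n fun i => (dot (x i) d) ^ 2 := Real.sq_sqrt (en_sq_nonneg n _)
  have hqn : 0 ≤ q := Real.sqrt_nonneg _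
  have hqsq : q ^ 2 = Qhat n x y βh := Real.sq_sqrt (en_sq_nonneg n _)
  have ha0 : 0 ≤ a := Finset.sum_nonneg fun j _ => abs_nonneg _
  have hb0 : 0 ≤ b := Finset.sum_nonneg fun j _ => abs_nonneg _
  have hra : l1 (scl γ (restr T d)) = a := l1_scl_restr γ d T
  have hrb : l1 (scl γ (restr Tᶜ d)) = b := l1_scl_restr γ d Tᶜ
  -- make all the `set` variables opaque (for performance)
  clear_value T d q0 t S G cbar L q ϱ a b
  have hL : 0 < L := by rw [hLdef]; exact div_pos hlam hn'
  -- Qhat at β₀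
  have hy0 : ∀ i, y i - dot (x i) β₀ = σ * ε i + rr i := fun i => by rw [hy i]; ring
  have hQy0 : Qhat n x y β₀ = En n fun i => (σ * ε i + rr i) ^ 2 := by
    unfold Qhat; exact congrArg (En n) (funext fun i => by rw [hy0 i])
  -- score times q0
  have hscore_dot : ∀ δ : Fin p → ℝ, q0 * dot S δ =
      En n (fun i => (σ * ε i + rr i) * dot (x i) δ) := by
    intro δ
    rw [en_mul_dot n x (fun i => σ * ε i + rr i) δ]
    simp only [hSdef, dot, score, Finset.mul_sum, ← hq0def]
    exact Finset.sum_congr rfl fun j _ => by field_simp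
  -- |S⬝δ| ≤ ‖δ‖₂ₙ for every δ (Cauchy–Schwarz)
  have habs : ∀ δ : Fin p → ℝ, |dot S δ| ≤ predNorm n x δ := by
    intro δ
    have h1 : |q0 * dot S δ| ≤ q0 * predNorm n x δ := by
      rw [hscore_dot δ]
      have h2 := cs_en n (fun i => σ * ε i + rr i) (fun i => dot (x i) δ)
      rw [← hq0def] at h2
      exact h2
    rw [abs_mul, abs_of_pos hq0] at h1
    exact le_of_mul_le_mul_left h1 hq0
  have hG : |G| ≤ t := by rw [hGdef, htdef]; exact habs d
  -- key identity
  have hdot_d : ∀ i, dot (x i) d = dot (x i) βh - dot (x i) β₀ := by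
    intro i; unfold dot; rw [← Finset.sum_sub_distrib]
    exact Finset.sum_congr rfl fun j _ => by
      rw [hddef]; simp only [Pi.sub_apply]; ring
  have hyd : ∀ i, y i - dot (x i) βh = (σ * ε i + rr i) - dot (x i) d := by
    intro i; rw [hy i, hdot_d i]; ring
  have hid : Qhat n x y βh =
      (En n fun i => (σ * ε i + rr i) ^ 2) - 2 * (q0 * G) + t ^ 2 := by
    have h1 : Qhat n x y βh = En n (fun i => ((σ * ε i + rr i) - dot (x i) d) ^ 2) := by
      unfold Qhat; exact congrArg (En n) (funext fun i => by rw [hyd i])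
    rw [h1, en_sq_sub n (fun i => σ * ε i + rr i) (fun i => dot (x i) d),
      ← hscore_dot d, ← hGdef, ← ht2]
  -- the lower bound √Q̂(β̂) ≥ q0 - G
  have hlow : q0 - G ≤ q := by
    have hG2 : G ^ 2 ≤ t ^ 2 := by
      have h3 := pow_le_pow_left₀ (abs_nonneg G) hG 2
      simpa [sq_abs] using h3
    have h1 : (q0 - G) ^ 2 ≤ Qhat n x y βh := by
      rw [hid, ← hq0sq]; nlinarith only [hG2]
    calc q0 - G ≤ |q0 - G| := le_abs_self _
      _ = Real.sqrt ((q0 - G) ^ 2) := (Real.sqrt_sq_eq_abs _).symm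
      _ ≤ q := by rw [hqdef]; exact Real.sqrt_le_sqrt h1
  -- minimizer inequality at β₀
  have hminβ0 : q + L * l1 (scl γ βh) ≤ q0 + L * l1 (scl γ β₀) := by
    have h := hmin β₀
    rw [hQy0, ← hq0def] at h
    exact h
  -- ℓ₁ pieces
  have hβ₀c : ∀ j ∈ Tᶜ, β₀ j = 0 := by
    intro j hj
    rw [hTdef] at hj
    simp only [supp, Finset.mem_compl, Finset.mem_filter, Finset.mem_univ,
      true_and, not_not] at hj
    exact hj
  have hab : l1 (scl γ d) = a + b := by
    unfold l1 scl
    rw [hadef, hbdef, ← Finset.sum_add_sum_compl T (fun j => |γ j * d j|)]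
  have hl1β₀ : l1 (scl γ β₀) = ∑ j ∈ T, |γ j * β₀ j| := by
    unfold l1 scl
    rw [← Finset.sum_add_sum_compl T (fun j => |γ j * β₀ j|)]
    have h1 : ∑ j ∈ Tᶜ, |γ j * β₀ j| = 0 :=
      Finset.sum_eq_zero fun j hj => by rw [hβ₀c j hj]; simp
    rw [h1, add_zero]
  have hl1βh : l1 (scl γ βh) = (∑ j ∈ T, |γ j * βh j|) + b := by
    unfold l1 scl
    rw [← Finset.sum_add_sum_compl T (fun j => |γ j * βh j|), hbdef]
    congr 1
    refine Finset.sum_congr rfl fun j hj => ?_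
    have h1 : d j = βh j := by
      rw [hddef]; simp only [Pi.sub_apply, hβ₀c j hj, sub_zero]
    rw [h1]
  have hdj : ∀ j, γ j * β₀ j - γ j * βh j = -(γ j * d j) := fun j => by
    rw [hddef]; simp only [Pi.sub_apply]; ring
  have hTab : ∑ j ∈ T, |γ j * β₀ j| - ∑ j ∈ T, |γ j * βh j| ≤ a := by
    rw [hadef, ← Finset.sum_sub_distrib]
    refine Finset.sum_le_sum fun j _ => ?_
    calc |γ j * β₀ j| - |γ j * βh j| ≤ |γ j * β₀ j - γ j * βh j| :=
          abs_sub_abs_le_abs_sub _ _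
      _ = |γ j * d j| := by rw [hdj j, abs_neg]
  -- F6 : l1(γβ₀) - l1(γβ̂) ≤ a - b
  have hF6 : l1 (scl γ β₀) - l1 (scl γ βh) ≤ a - b := by
    rw [hl1β₀, hl1βh]; linarith [hTab]
  -- F7 : b - a ≤ l1(γβ̂) - l1(γβ₀)
  have hF7 : b - a ≤ l1 (scl γ βh) - l1 (scl γ β₀) := by
    rw [hl1β₀, hl1βh]; linarith [hTab]
  -- dominance : |G| ≤ (L/c) * ‖Γδ‖₁
  have hsup : ∀ δ : Fin p → ℝ, |dot S δ| ≤ scoreSup n x ε rr σ γ * l1 (scl γ δ) := by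
    intro δ
    have hsupj : ∀ j, |S j| / γ j ≤ scoreSup n x ε rr σ γ := by
      intro j
      rw [hSdef]
      unfold scoreSup
      exact le_ciSup (f := fun j => |score n x ε rr σ j| / γ j)
        (Set.Finite.bddAbove (Set.finite_range _)) j
    calc |dot S δ| ≤ ∑ j, |S j * δ j| := by
          unfold dot; exact Finset.abs_sum_le_sum_abs _ _
      _ ≤ ∑ j, scoreSup n x ε rr σ γ * |γ j * δ j| := by
          refine Finset.sum_le_sum fun j _ => ?_
          have hγj : 0 < γ j := lt_of_lt_of_le one_pos (hγ j)
          have h1 : |S j * δ j| = (|S j| / γ j) * |γ j * δ j| := by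
            rw [abs_mul, abs_mul, abs_of_pos hγj]; field_simp
          rw [h1]
          exact mul_le_mul_of_nonneg_right (hsupj j) (abs_nonneg _)
      _ = scoreSup n x ε rr σ γ * l1 (scl γ δ) := by
          rw [← Finset.mul_sum]; rfl
  have hsupbd : scoreSup n x ε rr σ γ ≤ L / c := by
    rw [le_div_iff₀ hc0]
    calc scoreSup n x ε rr σ γ * c = c * scoreSup n x ε rr σ γ := by ring
      _ ≤ L := hdom
  have hl1d0 : 0 ≤ l1 (scl γ d) := Finset.sum_nonneg fun j _ => abs_nonneg _
  have hGsum : |G| ≤ (L / c) * (a + b) := by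
    calc |G| ≤ scoreSup n x ε rr σ γ * l1 (scl γ d) := by
          rw [hGdef]; exact hsup d
      _ ≤ (L / c) * l1 (scl γ d) := mul_le_mul_of_nonneg_right hsupbd hl1d0
      _ = (L / c) * (a + b) := by rw [hab]
  -- chain : L*(b-a) ≤ (L/c)*(a+b)
  have hchain : L * (b - a) ≤ (L / c) * (a + b) := by
    calc L * (b - a) ≤ L * (l1 (scl γ βh) - l1 (scl γ β₀)) :=
          mul_le_mul_of_nonneg_left hF7 hL.le
      _ = L * l1 (scl γ βh) - L * l1 (scl γ β₀) := by ring
      _ ≤ q0 - q := by linarith [hminβ0]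
      _ ≤ G := by linarith [hlow]
      _ ≤ |G| := le_abs_self _
      _ ≤ (L / c) * (a + b) := hGsum
  -- cone condition : b ≤ cbar * a
  have hcone : b ≤ cbar * a := by
    have h1 : c * (b - a) ≤ a + b := by
      have h2 : L * (c * (b - a)) ≤ L * (a + b) := by
        have h3 : (L / c) * (a + b) = L * (a + b) / c := by ring
        rw [h3] at hchain
        calc L * (c * (b - a)) = (L * (b - a)) * c := by ring
          _ ≤ (L * (a + b) / c) * c := mul_le_mul_of_nonneg_right hchain hc0.le
          _ = L * (a + b) := by field_simp
      exact le_of_mul_le_mul_left h2 hL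
    rw [hcbardef, div_mul_eq_mul_div, le_div_iff₀ hcb]
    nlinarith only [h1]
  -- ℓ₁ bound on βh : l1(γβ̂) ≤ cbar * l1(γβ₀)
  have hl1hb : l1 (scl γ βh) ≤ cbar * l1 (scl γ β₀) := by
    have hA0 : 0 ≤ l1 (scl γ β₀) := Finset.sum_nonneg fun j _ => abs_nonneg _
    have htri : a + b ≤ l1 (scl γ βh) + l1 (scl γ β₀) := by
      rw [← hab]
      unfold l1 scl
      rw [← Finset.sum_add_distrib]
      refine Finset.sum_le_sum fun j _ => ?_
      calc |γ j * d j| = |γ j * βh j - γ j * β₀ j| := by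
            congr 1; rw [hddef]; simp only [Pi.sub_apply]; ring
        _ ≤ |γ j * βh j| + |γ j * β₀ j| := abs_sub _ _
    have hch2 : L * (l1 (scl γ βh) - l1 (scl γ β₀)) ≤
        (L / c) * (l1 (scl γ βh) + l1 (scl γ β₀)) := by
      calc L * (l1 (scl γ βh) - l1 (scl γ β₀))
          = L * l1 (scl γ βh) - L * l1 (scl γ β₀) := by ring
        _ ≤ q0 - q := by linarith [hminβ0]
        _ ≤ G := by linarith [hlow]
        _ ≤ |G| := le_abs_self _
        _ ≤ (L / c) * (a + b) := hGsum
        _ ≤ (L / c) * (l1 (scl γ βh) + l1 (scl γ β₀)) := by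
            refine mul_le_mul_of_nonneg_left htri (by positivity)
    have h1 : c * (l1 (scl γ βh) - l1 (scl γ β₀)) ≤ l1 (scl γ βh) + l1 (scl γ β₀) := by
      have h2 : L * (c * (l1 (scl γ βh) - l1 (scl γ β₀))) ≤
          L * (l1 (scl γ βh) + l1 (scl γ β₀)) := by
        have h3 : (L / c) * (l1 (scl γ βh) + l1 (scl γ β₀)) =
            L * (l1 (scl γ βh) + l1 (scl γ β₀)) / c := by ring
        rw [h3] at hch2
        calc L * (c * (l1 (scl γ βh) - l1 (scl γ β₀)))
            = (L * (l1 (scl γ βh) - l1 (scl γ β₀))) * c := by ring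
          _ ≤ (L * (l1 (scl γ βh) + l1 (scl γ β₀)) / c) * c :=
              mul_le_mul_of_nonneg_right hch2 hc0.le
          _ = L * (l1 (scl γ βh) + l1 (scl γ β₀)) := by field_simp
      exact le_of_mul_le_mul_left h2 hL
    rw [hcbardef, div_mul_eq_mul_div, le_div_iff₀ hcb]
    nlinarith only [h1]
  -- varrho facts
  have hvnonneg : 0 ≤ ϱ := by
    rw [hϱdef]
    unfold varrho
    apply Real.sSup_nonneg
    rintro r ⟨δ, hδ, hpos, hl, rfl⟩
    exact div_nonneg (abs_nonneg _) hpos.le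
  -- ρ positivity
  have hsq : (0:ℝ) < Real.sqrt T.card := by
    apply Real.sqrt_pos.mpr
    exact_mod_cast Nat.lt_of_lt_of_le Nat.zero_lt_one hs
  have hρpos : 0 < ρ := by
    rw [hρdef]
    exact div_pos (mul_pos hlam hsq) (mul_pos hn' hκ)
  have h1mρ : 0 < 1 - ρ ^ 2 := by nlinarith only [hρpos, hρ]
  rcases eq_or_lt_of_le ht0 with hteq | htpos
  · -- t = 0 : RHS is nonnegative
    rw [hQy0, ← hq0def, ← hteq]
    have hdiv : 0 ≤ (ϱ + ρ) / (1 - ρ ^ 2) :=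
      div_nonneg (by linarith) h1mρ.le
    have h2q0 : 0 ≤ 2 * q0 := by linarith
    exact mul_nonneg h2q0 hdiv
  · -- t > 0
    have hd0 : d ≠ 0 := by
      intro h
      have h1 : t = 0 := by
        rw [htdef, h]
        simp [predNorm, dot, En]
      linarith
    -- bound |G| ≤ ϱ t via membership of |G|/t in the varrho set
    have hGϱ : |G| ≤ ϱ * t := by
      have h1 : |G| / t ≤ ϱ := by
        rw [hϱdef]
        unfold varrho
        apply le_csSup
        · refine ⟨1, ?_⟩
          rintro r ⟨δ, hδ, hpos, hl, rfl⟩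
          rw [div_le_one hpos]
          exact habs δ
        · refine ⟨d, ⟨hd0, ?_⟩, by rw [← htdef]; exact htpos, ?_, by rw [hGdef, htdef]⟩
          · rw [hrb, hra]; exact hcone
          · have hdb : d + β₀ = βh := by
              rw [hddef]; funext j; simp
            rw [hdb]; exact hl1hb
      calc |G| = (|G| / t) * t := by field_simp
        _ ≤ ϱ * t := mul_le_mul_of_nonneg_right h1 ht0
    have hGϱ2 : G ≤ ϱ * t := (le_abs_self G).trans hGϱ
    -- L * (a - b) ≤ ρ * t
    have hDρ : L * (a - b) ≤ ρ * t := by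
      rcases le_or_gt a b with hba | hba
      · have h1 : L * (a - b) ≤ 0 := mul_nonpos_of_nonneg_of_nonpos hL.le (by linarith)
        have h2 : 0 ≤ ρ * t := mul_nonneg hρpos.le ht0
        linarith
      · have hκle : kappaTilde n x γ T ≤ Real.sqrt T.card * t / (a - b) := by
          apply csInf_le
          · refine ⟨0, fun r hr => ?_⟩
            obtain ⟨δ, hδlt, hreq⟩ := hr
            rw [hreq]
            apply div_nonneg
            · exact mul_nonneg (Real.sqrt_nonneg _) (by unfold predNorm; exact Real.sqrt_nonneg _)
            · linarith
          · exact ⟨d, by rw [hra, hrb]; exact hba, by rw [hra, hrb, ← htdef]⟩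
        have h2 : kappaTilde n x γ T * (a - b) ≤ Real.sqrt T.card * t := by
          rwa [le_div_iff₀ (by linarith : (0:ℝ) < a - b)] at hκle
        rw [hρdef, hLdef, div_mul_eq_mul_div, div_mul_eq_mul_div,
          div_le_div_iff₀ hn' (mul_pos hn' hκ)]
        nlinarith only [mul_le_mul_of_nonneg_left h2 (mul_pos hlam hn').le]
    -- upper bound on q
    have hupper : q ≤ q0 + ρ * t := by
      have h1 : q ≤ q0 + L * (l1 (scl γ β₀) - l1 (scl γ βh)) := by linarith [hminβ0]
      have h2 : L * (l1 (scl γ β₀) - l1 (scl γ βh)) ≤ L * (a - b) :=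
        mul_le_mul_of_nonneg_left hF6 hL.le
      linarith
    -- final algebra
    have hident : t ^ 2 = q ^ 2 - q0 ^ 2 + 2 * (q0 * G) := by
      rw [hqsq, hid, hq0sq]; ring
    have hq2 : q ^ 2 ≤ (q0 + ρ * t) ^ 2 := by
      have h0 : 0 ≤ q0 + ρ * t := by positivity
      nlinarith only [hupper, hqn, h0]
    have hGq0 : q0 * G ≤ q0 * (ϱ * t) := mul_le_mul_of_nonneg_left hGϱ2 hq0.le
    have hmain : t ^ 2 ≤ 2 * q0 * ρ * t + ρ ^ 2 * t ^ 2 + 2 * q0 * (ϱ * t) := by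
      nlinarith only [hident, hq2, hGq0]
    rw [hQy0, ← hq0def, ← mul_div_assoc, le_div_iff₀ h1mρ]
    have hfin : (t * (1 - ρ ^ 2)) * t ≤ (2 * q0 * (ϱ + ρ)) * t := by
      nlinarith only [hmain]
    exact le_of_mul_le_mul_right hfin htpos

end SqrtLasso
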